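/- arXiv:2005.12017 — 3 statements merged into one kernel-verified Lean document; each statement's English description precedes it below -/
import Mathlib

section
/- Suppose Y, A, L are random variables with E[Y | A, L] = E[Y | L] a.s., A is {0,1}-valued, and e(L) = P(A = 1 | L), μ(L) = E[Y | L]. Then for any bounded measurable function q(L), E[q(L)·(Y − μ(L))·(A − e(L))] = 0. -/
open MeasureTheory ProbabilityTheory MeasurableSpace

/-- Unbiasedness of the g-estimation estimating function at a single time point:
if `E[Y | A, L] = E[Y | L]` a.s., `A` is binary, `e(L) = E[A | L]`, `μ(L) = E[Y | L]`,
then for any bounded measurable `q`, `E[q(L)(Y − μ(L))(A − e(L))] = 0`. -/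
theorem stmt1 {Ω β : Type*} [MeasurableSpace Ω] [MeasurableSpace β]
    (μ : Measure Ω) [IsProbabilityMeasure μ]
    (Y A : Ω → ℝ) (L : Ω → β)
    (hYint : Integrable Y μ) (hYm : Measurable Y) (hAm : Measurable A) (hLm : Measurable L)
    (hAbin : ∀ ω, A ω = 0 ∨ A ω = 1)
    (q : β → ℝ) (hqm : Measurable q) (C : ℝ) (hqC : ∀ b, |q b| ≤ C)
    (hCE : μ[Y | MeasurableSpace.comap A inferInstance ⊔ MeasurableSpace.comap L inferInstance]
      =ᵐ[μ] μ[Y | MeasurableSpace.comap L inferInstance]) :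
    ∫ ω, q (L ω) * (Y ω - (μ[Y | MeasurableSpace.comap L inferInstance]) ω)
      * (A ω - (μ[A | MeasurableSpace.comap L inferInstance]) ω) ∂μ = 0 := by
  have hmL : MeasurableSpace.comap L inferInstance ≤ ‹MeasurableSpace Ω› := hLm.comap_le
  have hm2 : (MeasurableSpace.comap A inferInstance ⊔ MeasurableSpace.comap L inferInstance)
      ≤ ‹MeasurableSpace Ω› := sup_le hAm.comap_le hLm.comap_le
  set mL : MeasurableSpace Ω := MeasurableSpace.comap L inferInstance with hmLdef
  set m2 : MeasurableSpace Ω :=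
    MeasurableSpace.comap A inferInstance ⊔ MeasurableSpace.comap L inferInstance with hm2def
  have hmL2 : mL ≤ m2 := le_sup_right
  set g : Ω → ℝ := fun ω => q (L ω) * (A ω - (μ[A | mL]) ω) with hgdef
  set h : Ω → ℝ := fun ω => Y ω - (μ[Y | mL]) ω with hhdef
  -- g is m2-strongly measurable
  have hqL : StronglyMeasurable[m2] fun ω => q (L ω) := by
    refine Measurable.stronglyMeasurable ?_
    exact (hqm.comp (measurable_iff_comap_le.2 le_sup_right))
  have hA2 : StronglyMeasurable[m2] A :=
    (measurable_iff_comap_le.2 (le_sup_left : MeasurableSpace.comap A inferInstance ≤ m2)).stronglyMeasurable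
  have heL : StronglyMeasurable[m2] (μ[A | mL]) :=
    (stronglyMeasurable_condExp.mono hmL2)
  have hg_sm : StronglyMeasurable[m2] g := hqL.mul (hA2.sub heL)
  -- boundedness of A and its conditional expectation
  have hAbd : ∀ᵐ ω ∂μ, |A ω| ≤ (1 : NNReal) := by
    refine Filter.Eventually.of_forall fun ω => ?_
    rcases hAbin ω with h0 | h0 <;> simp [h0]
  have hebd : ∀ᵐ ω ∂μ, |(μ[A | mL]) ω| ≤ (1 : NNReal) := ae_bdd_condExp_of_ae_bdd hAbd
  have hgbd : ∀ᵐ ω ∂μ, ‖g ω‖ ≤ C * 2 := by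
    filter_upwards [hAbd, hebd] with ω h1 h2
    have hC0 : (0 : ℝ) ≤ C := le_trans (abs_nonneg _) (hqC (L ω))
    have : ‖g ω‖ = |q (L ω)| * |A ω - (μ[A | mL]) ω| := by
      simp [hgdef, abs_mul, Real.norm_eq_abs]
    rw [this]
    have habs : |A ω - (μ[A | mL]) ω| ≤ 2 := by
      calc |A ω - (μ[A | mL]) ω| ≤ |A ω| + |(μ[A | mL]) ω| := abs_sub _ _
        _ ≤ 1 + 1 := by push_cast at h1 h2; linarith
        _ = 2 := by norm_num
    exact mul_le_mul (hqC (L ω)) habs (abs_nonneg _) hC0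
  -- integrability
  have hh_int : Integrable h μ := hYint.sub integrable_condExp
  have hg_aesm :=
    (hg_sm.mono hm2).aestronglyMeasurable (μ := μ)
  have hgh_int : Integrable (fun ω => g ω * h ω) μ :=
    hh_int.bdd_mul hg_aesm hgbd
  have hgh_int' : Integrable (g * h) μ := hgh_int
  -- conditional expectation of h given m2 is 0
  have hh0 : μ[h | m2] =ᵐ[μ] 0 := by
    have h1 : μ[h | m2] =ᵐ[μ] μ[Y | m2] - μ[(μ[Y | mL]) | m2] :=
      condExp_sub hYint integrable_condExp m2
    have h2 : μ[(μ[Y | mL]) | m2] = μ[Y | mL] :=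
      condExp_of_stronglyMeasurable hm2 (stronglyMeasurable_condExp.mono hmL2) integrable_condExp
    filter_upwards [h1, hCE] with ω hω1 hω2
    simp only [Pi.sub_apply, Pi.zero_apply] at *
    rw [hω1, h2, hω2]
    ring
  -- pull-out
  have hpull : μ[g * h | m2] =ᵐ[μ] g * μ[h | m2] :=
    condExp_mul_of_stronglyMeasurable_left hg_sm hgh_int' hh_int
  have hzero : μ[g * h | m2] =ᵐ[μ] 0 := by
    filter_upwards [hpull, hh0] with ω h1 h2
    simp only [Pi.mul_apply, Pi.zero_apply] at *
    rw [h1, h2, mul_zero]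
  have key : ∫ ω, g ω * h ω ∂μ = 0 := by
    have : ∫ ω, (g * h) ω ∂μ = 0 := by
      rw [← integral_condExp hm2 (f := g * h), integral_congr_ae hzero]; simp
    simpa using this
  rw [← key]
  refine integral_congr_ae (Filter.Eventually.of_forall fun ω => ?_)
  simp only [hgdef, hhdef]
  ring
end

section
/- Double robustness (single time point): let Y be integrable, A ∈ {0,1}, L a covariate, with E[Y | A, L] = E[Y | L] a.s. Let ê(L) and μ̂(L) be arbitrary bounded measurable functions of L. If either ê(L) = E[A | L] a.s. or μ̂(L) = E[Y | L] a.s., then E[(Y − μ̂(L))·(A − ê(L))] = 0. -/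
open MeasureTheory ProbabilityTheory MeasurableSpace

lemma key_int {Ω : Type*} [m0 : MeasurableSpace Ω] (μ : Measure Ω) [IsProbabilityMeasure μ]
    {m : MeasurableSpace Ω} (hm : m ≤ m0) {f h : Ω → ℝ}
    (hf : Integrable f μ) (hh : StronglyMeasurable[m] h)
    (hhf : Integrable (fun ω => h ω * f ω) μ) :
    ∫ ω, h ω * f ω ∂μ = ∫ ω, h ω * (μ[f|m]) ω ∂μ := by
  have hpull : μ[(fun ω => h ω * f ω)|m] =ᵐ[μ] fun ω => h ω * (μ[f|m]) ω :=
    condExp_mul_of_stronglyMeasurable_left hh hhf hf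
  calc ∫ ω, h ω * f ω ∂μ = ∫ ω, (μ[(fun ω => h ω * f ω)|m]) ω ∂μ :=
        (integral_condExp hm).symm
    _ = ∫ ω, h ω * (μ[f|m]) ω ∂μ := integral_congr_ae hpull

/-- Double robustness at a single time point: under `E[Y | A, L] = E[Y | L]` a.s., for bounded
measurable working models `ê, μ̂`, if either `ê(L) = E[A | L]` a.s. or `μ̂(L) = E[Y | L]` a.s.,
then `E[(Y − μ̂(L))(A − ê(L))] = 0`. -/
theorem stmt2 {Ω β : Type*} [MeasurableSpace Ω] [MeasurableSpace β]
    (μ : Measure Ω) [IsProbabilityMeasure μ]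
    (Y A : Ω → ℝ) (L : Ω → β)
    (hYint : Integrable Y μ) (hYm : Measurable Y) (hAm : Measurable A) (hLm : Measurable L)
    (hAbin : ∀ ω, A ω = 0 ∨ A ω = 1)
    (ehat muhat : β → ℝ) (hem : Measurable ehat) (hmm : Measurable muhat)
    (Ce Cmu : ℝ) (heC : ∀ b, |ehat b| ≤ Ce) (hmC : ∀ b, |muhat b| ≤ Cmu)
    (hCE : μ[Y | MeasurableSpace.comap A inferInstance ⊔ MeasurableSpace.comap L inferInstance]
      =ᵐ[μ] μ[Y | MeasurableSpace.comap L inferInstance])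
    (hDR : ((fun ω => ehat (L ω)) =ᵐ[μ] μ[A | MeasurableSpace.comap L inferInstance])
      ∨ ((fun ω => muhat (L ω)) =ᵐ[μ] μ[Y | MeasurableSpace.comap L inferInstance])) :
    ∫ ω, (Y ω - muhat (L ω)) * (A ω - ehat (L ω)) ∂μ = 0 := by
  rename_i mΩ mβ hprob
  set mL : MeasurableSpace Ω := MeasurableSpace.comap L inferInstance with hmL
  set mAL : MeasurableSpace Ω :=
    MeasurableSpace.comap A inferInstance ⊔ MeasurableSpace.comap L inferInstance with hmAL
  have hmL_le : mL ≤ mΩ := hLm.comap_le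
  have hmAL_le : mAL ≤ mΩ := sup_le hAm.comap_le hLm.comap_le
  -- measurability facts
  have hL_mL : Measurable[mL] L := Measurable.of_comap_le le_rfl
  have hL_mAL : Measurable[mAL] L := Measurable.of_comap_le le_sup_right
  have hA_mAL : Measurable[mAL] A := Measurable.of_comap_le le_sup_left
  have heL_mL : Measurable[mL] (fun ω => ehat (L ω)) := hem.comp hL_mL
  have heL_mAL : Measurable[mAL] (fun ω => ehat (L ω)) := hem.comp hL_mAL
  have hmuL_mL : Measurable[mL] (fun ω => muhat (L ω)) := hmm.comp hL_mL
  have hmuL_mAL : Measurable[mAL] (fun ω => muhat (L ω)) := hmm.comp hL_mAL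
  -- boundedness / integrability facts
  have hAbd : ∀ ω, |A ω| ≤ 1 := by
    intro ω; rcases hAbin ω with h | h <;> simp [h]
  have hAint : Integrable A μ :=
    (integrable_const (1 : ℝ)).mono' (hAm.aestronglyMeasurable)
      (Filter.Eventually.of_forall fun ω => by simpa using hAbd ω)
  have heLint : Integrable (fun ω => ehat (L ω)) μ :=
    (integrable_const Ce).mono' ((hem.comp hLm).aestronglyMeasurable)
      (Filter.Eventually.of_forall fun ω => by simpa using heC (L ω))
  have hmuLint : Integrable (fun ω => muhat (L ω)) μ :=
    (integrable_const Cmu).mono' ((hmm.comp hLm).aestronglyMeasurable)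
      (Filter.Eventually.of_forall fun ω => by simpa using hmC (L ω))
  have hAe_int : Integrable (fun ω => A ω - ehat (L ω)) μ := hAint.sub heLint
  have hAe_bd : ∀ ω, ‖A ω - ehat (L ω)‖ ≤ 1 + Ce := by
    intro ω
    calc ‖A ω - ehat (L ω)‖ ≤ ‖A ω‖ + ‖ehat (L ω)‖ := norm_sub_le _ _
      _ ≤ 1 + Ce := by
          have := hAbd ω; have := heC (L ω)
          simp only [Real.norm_eq_abs]; linarith
  have hYmu_int : Integrable (fun ω => Y ω - muhat (L ω)) μ := hYint.sub hmuLint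
  -- conditional expectation of A - ê(L) given L (used in case 1)
  rcases hDR with hDR | hDR
  · -- ê = E[A|L]
    -- E[A - êL | L] = 0 a.e.
    have hcondAe : μ[(fun ω => A ω - ehat (L ω))|mL] =ᵐ[μ] 0 := by
      have h1 : μ[(fun ω => A ω - ehat (L ω))|mL]
          =ᵐ[μ] μ[A|mL] - μ[(fun ω => ehat (L ω))|mL] := condExp_sub hAint heLint mL
      have h2 : μ[(fun ω => ehat (L ω))|mL] = fun ω => ehat (L ω) :=
        condExp_of_stronglyMeasurable (μ := μ) hmL_le heL_mL.stronglyMeasurable heLint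
      filter_upwards [h1, hDR] with ω h1 h2'
      simp [h1, h2, Pi.sub_apply, ← h2']
    -- split the integral
    have hYAe_int : Integrable (fun ω => Y ω * (A ω - ehat (L ω))) μ := by
      have h1 := hYint.bdd_mul (c := 1 + Ce)
        ((hAm.sub (hem.comp hLm)).aestronglyMeasurable)
        (Filter.Eventually.of_forall hAe_bd)
      exact h1.congr (Filter.Eventually.of_forall fun ω => mul_comm _ _)
    have hmuAe_int : Integrable (fun ω => muhat (L ω) * (A ω - ehat (L ω))) μ := by
      exact hAe_int.bdd_mul (c := Cmu) ((hmm.comp hLm).aestronglyMeasurable)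
        (Filter.Eventually.of_forall fun ω => by simpa using hmC (L ω))
    have hsplit : ∫ ω, (Y ω - muhat (L ω)) * (A ω - ehat (L ω)) ∂μ
        = ∫ ω, Y ω * (A ω - ehat (L ω)) ∂μ
          - ∫ ω, muhat (L ω) * (A ω - ehat (L ω)) ∂μ := by
      rw [← integral_sub hYAe_int hmuAe_int]
      congr 1; funext ω; ring
    -- second term is 0
    have hterm2 : ∫ ω, muhat (L ω) * (A ω - ehat (L ω)) ∂μ = 0 := by
      rw [key_int (m0 := mΩ) μ hmL_le hAe_int hmuL_mL.stronglyMeasurable hmuAe_int]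
      rw [integral_congr_ae (g := fun _ => (0:ℝ))]
      · simp
      · filter_upwards [hcondAe] with ω h; simp [h]
    -- first term: condition on mAL, then use CMI, then condition on mL
    have hterm1 : ∫ ω, Y ω * (A ω - ehat (L ω)) ∂μ = 0 := by
      have hstep1 : ∫ ω, Y ω * (A ω - ehat (L ω)) ∂μ
          = ∫ ω, (A ω - ehat (L ω)) * (μ[Y|mAL]) ω ∂μ := by
        rw [← key_int (m0 := mΩ) (h := fun ω => A ω - ehat (L ω)) μ hmAL_le hYint (hA_mAL.sub heL_mAL).stronglyMeasurable
          (by simpa [mul_comm] using hYAe_int)]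
        congr 1; funext ω; ring
      rw [hstep1]
      have hstep2 : ∫ ω, (A ω - ehat (L ω)) * (μ[Y|mAL]) ω ∂μ
          = ∫ ω, (μ[Y|mL]) ω * (A ω - ehat (L ω)) ∂μ := by
        apply integral_congr_ae
        filter_upwards [hCE] with ω h; rw [h]; ring
      rw [hstep2]
      have hEYL_int : Integrable (μ[Y|mL]) μ := integrable_condExp
      have hprod_int : Integrable (fun ω => (μ[Y|mL]) ω * (A ω - ehat (L ω))) μ := by
        have h1 := hEYL_int.bdd_mul (c := 1 + Ce)
          ((hAm.sub (hem.comp hLm)).aestronglyMeasurable)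
          (Filter.Eventually.of_forall hAe_bd)
        exact h1.congr (Filter.Eventually.of_forall fun ω => mul_comm _ _)
      rw [key_int (m0 := mΩ) μ hmL_le hAe_int stronglyMeasurable_condExp hprod_int]
      rw [integral_congr_ae (g := fun _ => (0:ℝ))]
      · simp
      · filter_upwards [hcondAe] with ω h; simp [h]
    rw [hsplit, hterm1, hterm2]; ring
  · -- μ̂ = E[Y|L]
    have hint : Integrable (fun ω => (A ω - ehat (L ω)) * (Y ω - muhat (L ω))) μ :=
      hYmu_int.bdd_mul (c := 1 + Ce) ((hAm.sub (hem.comp hLm)).aestronglyMeasurable)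
        (Filter.Eventually.of_forall hAe_bd)
    have hswap : ∫ ω, (Y ω - muhat (L ω)) * (A ω - ehat (L ω)) ∂μ
        = ∫ ω, (A ω - ehat (L ω)) * (Y ω - muhat (L ω)) ∂μ := by
      congr 1; funext ω; ring
    rw [hswap, key_int (m0 := mΩ) (h := fun ω => A ω - ehat (L ω)) μ hmAL_le hYmu_int (hA_mAL.sub heL_mAL).stronglyMeasurable hint]
    have hcond : μ[(fun ω => Y ω - muhat (L ω))|mAL] =ᵐ[μ] 0 := by
      have h1 : μ[(fun ω => Y ω - muhat (L ω))|mAL]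
          =ᵐ[μ] μ[Y|mAL] - μ[(fun ω => muhat (L ω))|mAL] := condExp_sub hYint hmuLint mAL
      have h2 : μ[(fun ω => muhat (L ω))|mAL] = fun ω => muhat (L ω) :=
        condExp_of_stronglyMeasurable (μ := μ) hmAL_le hmuL_mAL.stronglyMeasurable hmuLint
      filter_upwards [h1, hCE, hDR] with ω h1 hce hdr
      simp only [Pi.sub_apply, Pi.zero_apply] at *
      rw [h1, h2, hce, ← hdr]; ring
    rw [integral_congr_ae (g := fun _ => (0:ℝ))]
    · simp
    · filter_upwards [hcond] with ω h; simp [h]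
end

section
/- Optimal weighting minimizes variance: among estimators of ψ* of the form ψ̂_q solving Σᵢ qᵢ(Yᵢ − ψAᵢ − μᵢ)(Aᵢ − eᵢ) = 0 in the model Y = ψ*A + ε with E[ε | A, L] = 0, Var(ε | L) = v(L), A ⫫ ε | L, the asymptotic variance E[q(L)²v(L)e(L)(1−e(L))]/E[q(L)e(L)(1−e(L))]², viewed as a functional of q, is minimized over measurable q > 0 by q(L) ∝ 1/v(L). -/
open MeasureTheory

/-- Optimal weighting minimizes the asymptotic variance: for the variance functional
`V(q) = E[q² v e(1−e)] / E[q e(1−e)]²` with conditional outcome variance `v > 0` and propensity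
`e ∈ (0,1)`, the choice `q = 1/v` minimizes `V` over positive measurable weights `q`,
i.e. `V(1/v) ≤ V(q)`. -/
theorem stmt11 {Ω : Type*} [MeasurableSpace Ω]
    (μ : Measure Ω) [IsProbabilityMeasure μ]
    (v e q : Ω → ℝ)
    (hvm : Measurable v) (hem : Measurable e) (hqm : Measurable q)
    (hv : ∀ ω, 0 < v ω) (he : ∀ ω, 0 < e ω ∧ e ω < 1) (hq : ∀ ω, 0 < q ω)
    (hint1 : Integrable (fun ω => q ω ^ 2 * v ω * (e ω * (1 - e ω))) μ)
    (hint2 : Integrable (fun ω => q ω * (e ω * (1 - e ω))) μ)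
    (hint3 : Integrable (fun ω => (v ω)⁻¹ * (e ω * (1 - e ω))) μ)
    (hpos1 : 0 < ∫ ω, q ω * (e ω * (1 - e ω)) ∂μ)
    (hpos2 : 0 < ∫ ω, (v ω)⁻¹ * (e ω * (1 - e ω)) ∂μ) :
    (∫ ω, ((v ω)⁻¹) ^ 2 * v ω * (e ω * (1 - e ω)) ∂μ)
        / (∫ ω, (v ω)⁻¹ * (e ω * (1 - e ω)) ∂μ) ^ 2
      ≤ (∫ ω, q ω ^ 2 * v ω * (e ω * (1 - e ω)) ∂μ)
        / (∫ ω, q ω * (e ω * (1 - e ω)) ∂μ) ^ 2 := by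
  set I1 := ∫ ω, q ω ^ 2 * v ω * (e ω * (1 - e ω)) ∂μ with hI1
  set I2 := ∫ ω, q ω * (e ω * (1 - e ω)) ∂μ with hI2
  set I3 := ∫ ω, (v ω)⁻¹ * (e ω * (1 - e ω)) ∂μ with hI3
  have hLHS : (∫ ω, ((v ω)⁻¹) ^ 2 * v ω * (e ω * (1 - e ω)) ∂μ) = I3 := by
    refine integral_congr_ae (Filter.Eventually.of_forall fun ω => ?_)
    have hvω := (hv ω).ne'
    field_simp
  rw [hLHS]
  set t : ℝ := I2 / I3 with ht
  -- Cauchy–Schwarz via nonnegativity of ∫ (q v − t)² v⁻¹ w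
  have hkey : I2 ^ 2 ≤ I1 * I3 := by
    have h0 : 0 ≤ ∫ ω, (q ω * v ω - t) ^ 2 * (v ω)⁻¹ * (e ω * (1 - e ω)) ∂μ := by
      refine integral_nonneg fun ω => ?_
      have hw : 0 ≤ e ω * (1 - e ω) :=
        mul_nonneg (he ω).1.le (by linarith [(he ω).2])
      exact mul_nonneg (mul_nonneg (sq_nonneg _) (inv_nonneg.mpr (hv ω).le)) hw
    have heq : (∫ ω, (q ω * v ω - t) ^ 2 * (v ω)⁻¹ * (e ω * (1 - e ω)) ∂μ)
        = I1 - 2 * t * I2 + t ^ 2 * I3 := by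
      have hptw : ∀ ω, (q ω * v ω - t) ^ 2 * (v ω)⁻¹ * (e ω * (1 - e ω))
          = q ω ^ 2 * v ω * (e ω * (1 - e ω)) - 2 * t * (q ω * (e ω * (1 - e ω)))
            + t ^ 2 * ((v ω)⁻¹ * (e ω * (1 - e ω))) := by
        intro ω
        have hvω := (hv ω).ne'
        field_simp
        ring
      rw [integral_congr_ae (Filter.Eventually.of_forall hptw)]
      have hA : Integrable (fun ω => q ω ^ 2 * v ω * (e ω * (1 - e ω))
          - 2 * t * (q ω * (e ω * (1 - e ω)))) μ := hint1.sub (hint2.const_mul _)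
      rw [integral_add hA (hint3.const_mul _), integral_sub hint1 (hint2.const_mul _),
        integral_const_mul, integral_const_mul]
    rw [heq] at h0
    have ht' : t = I2 / I3 := rfl
    have hI3ne : I3 ≠ 0 := hpos2.ne'
    rw [ht'] at h0
    have hexp : (I1 - 2 * (I2 / I3) * I2 + (I2 / I3) ^ 2 * I3) * I3 = I1 * I3 - I2 ^ 2 := by
      field_simp
      ring
    nlinarith [mul_nonneg h0 hpos2.le]
  rw [div_le_div_iff₀ (by positivity) (by positivity)]
  nlinarith [hpos2, hkey, sq_nonneg I2]
end
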